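/- Let v ⋖ w be a cover relation of the greedy m-Tamari order, where v and w are nonempty m-Dyck paths, and let v' (respectively w') be obtained from v (respectively w) by deleting its last peak, i.e., the last up step together with the m down steps immediately following it. Then either v' = w' (which happens exactly when the cover relation takes place in the last valley of v), or v' ⋖ w'. Consequently, if v ≤ w in the greedy order and v', w' are obtained from v, w by deleting the last peak, then v' ≤ w'. -/

import Mathlib

/-! Words over `Bool` encode lattice paths: `true` = up step (letter 1),
`false` = down step (letter 0). -/

/-- `w` is an `m`-Dyck word: the number of 0's is `m` times the number of 1's,
and every prefix `p` satisfies `m·|p|₁ ≥ |p|₀`.  (The empty word is allowed;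
an `m`-Dyck path of size `n` is an `m`-Dyck word with `n` letters 1.) -/
def IsDyck (m : ℕ) (w : List Bool) : Prop :=
  w.count false = m * w.count true ∧
  ∀ p : List Bool, p <+: w → p.count false ≤ m * p.count true

/-- Cover relation of the greedy `m`-Tamari order: swap a valley's down step with
the *longest* Dyck factor that follows it. -/
def GreedyCover (m : ℕ) (w w' : List Bool) : Prop :=
  ∃ u d v : List Bool, d ≠ [] ∧ IsDyck m d ∧
    w = u ++ false :: (d ++ v) ∧
    w' = u ++ d ++ false :: v ∧
    ∀ d' : List Bool, d' <+: d ++ v → IsDyck m d' → d'.length ≤ d.length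

/-- The greedy `m`-Tamari order (reflexive-transitive closure of the cover relation). -/
def GreedyLe (m : ℕ) : List Bool → List Bool → Prop :=
  Relation.ReflTransGen (GreedyCover m)

/-- Cover relation of the ordinary `m`-Tamari order: swap a valley's down step with
the *shortest nonempty* Dyck factor that follows it. -/
def OrdCover (m : ℕ) (w w' : List Bool) : Prop :=
  ∃ u d v : List Bool, d ≠ [] ∧ IsDyck m d ∧
    w = u ++ false :: (d ++ v) ∧
    w' = u ++ d ++ false :: v ∧
    ∀ d' : List Bool, d' <+: d ++ v → IsDyck m d' → d' ≠ [] → d.length ≤ d'.length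

/-- The ordinary `m`-Tamari order. -/
def OrdLe (m : ℕ) : List Bool → List Bool → Prop :=
  Relation.ReflTransGen (OrdCover m)

/-- The word `1·0^m` (a single peak), unit of the monoid `(D_m, *)`. -/
def peakWord (m : ℕ) : List Bool := true :: List.replicate m false

/-- Length of the final descent: the longest suffix of the form `0^k`. -/
def finalDescent (w : List Bool) : ℕ := (w.reverse.takeWhile (fun b => !b)).length

/-- The product `w₁ * w₂` on nonempty `m`-Dyck words: replace the rightmost peak
(the last up step together with the `m` down steps following it) of `w₁` by `w₂`. -/
def star (m : ℕ) (w₁ w₂ : List Bool) : List Bool :=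
  w₁.take (w₁.length - (finalDescent w₁ + 1)) ++ w₂ ++
    List.replicate (finalDescent w₁ - m) false

/-- Delete the last peak (the last up step and the `m` down steps following it). -/
def delPeak (m : ℕ) (w : List Bool) : List Bool :=
  w.take (w.length - (finalDescent w + 1)) ++ List.replicate (finalDescent w - m) false

/-- `D(w₀, …, w_m) = 1 (w₀ 0) (w₁ 0) ⋯ (w_{m-1} 0) w_m` : the canonical
decomposition of nonempty `m`-Dyck words (components indexed by `Fin (m+1)`). -/
def Dpath (m : ℕ) (ws : Fin (m+1) → List Bool) : List Bool :=
  true :: ((List.ofFn fun j : Fin m => ws j.castSucc ++ [false]).flatten ++ ws (Fin.last m))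

/-- Generators of the free monoid `(D_m, *)` : the words
`D(w₁,…,w_{i−1}, 1·0^m, ∅,…,∅)` with Dyck (possibly empty) components before
position `i`. -/
def IsGenerator (m : ℕ) (g : List Bool) : Prop :=
  ∃ i : Fin (m+1), ∃ ws : Fin (m+1) → List Bool,
    (∀ j, IsDyck m (ws j)) ∧ ws i = peakWord m ∧
    (∀ j : Fin (m+1), i < j → ws j = []) ∧ g = Dpath m ws

/-- A prime (no contact) nonempty `m`-Dyck word: no proper nonempty prefix `p`
satisfies `m·|p|₁ = |p|₀`. -/
def IsPrimePath (m : ℕ) (w : List Bool) : Prop :=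
  IsDyck m w ∧ w ≠ [] ∧
  ∀ p : List Bool, p <+: w → p ≠ [] → p ≠ w → p.count false ≠ m * p.count true

open List

lemma prefix_split {α : Type*} {p a b : List α} (h : p <+: a ++ b) :
    p <+: a ∨ ∃ q, q <+: b ∧ p = a ++ q := by
  rcases le_or_gt p.length a.length with hl | hl
  · left
    rw [List.prefix_iff_eq_take] at h ⊢
    rw [h, List.take_append, Nat.sub_eq_zero_of_le hl, List.take_zero,
      List.append_nil, List.length_take]
    congr 1
    omega
  · right
    refine ⟨b.take (p.length - a.length), List.take_prefix _ _, ?_⟩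
    rw [List.prefix_iff_eq_take] at h
    conv_lhs => rw [h]
    rw [List.take_append, List.take_of_length_le (by omega)]

lemma prefix_replicate {p : List Bool} {k : ℕ} (h : p <+: List.replicate k false) :
    p = List.replicate p.length false ∧ p.length ≤ k := by
  refine ⟨List.eq_replicate_length.2 fun b hb => ?_, by simpa using h.length_le⟩
  have := h.sublist.subset hb
  simpa using List.eq_of_mem_replicate this

lemma takeWhile_rep (k : ℕ) (y : List Bool) :
    (List.replicate k false ++ true :: y).takeWhile (fun b => !b) = List.replicate k false := by
  induction k with
  | zero => simp [List.takeWhile]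
  | succ n ih => simp [List.replicate_succ, List.takeWhile, ih]

lemma finalDescent_eq (x : List Bool) (k : ℕ) :
    finalDescent (x ++ true :: List.replicate k false) = k := by
  unfold finalDescent
  rw [List.reverse_append, List.reverse_cons, List.reverse_replicate, List.append_assoc,
    List.singleton_append, takeWhile_rep, List.length_replicate]

lemma delPeak_eq (m : ℕ) (x : List Bool) (k : ℕ) :
    delPeak m (x ++ true :: List.replicate k false) = x ++ List.replicate (k - m) false := by
  unfold delPeak
  rw [finalDescent_eq]
  have h1 : (x ++ true :: List.replicate k false).length = x.length + (k + 1) := by simp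
  rw [h1, Nat.add_sub_cancel]
  congr 1
  rw [List.take_append, List.take_of_length_le (le_refl _), Nat.sub_self,
    List.take_zero, List.append_nil]

lemma dyck_head {m : ℕ} {d : List Bool} (h : IsDyck m d) (hne : d ≠ []) :
    ∃ t, d = true :: t := by
  cases d with
  | nil => exact absurd rfl hne
  | cons b t =>
    cases b
    · have := h.2 [false] ⟨t, rfl⟩
      simp at this
    · exact ⟨t, rfl⟩

lemma cover_ne {m : ℕ} {a b : List Bool} (h : GreedyCover m a b) : a ≠ b := by
  obtain ⟨u, d, v, hd, hdy, ha, hb, -⟩ := h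
  obtain ⟨t, ht⟩ := dyck_head hdy hd
  intro heq
  rw [ha, hb, List.append_assoc, ht] at heq
  have := List.append_cancel_left heq
  simp at this

lemma decomp_true {r : List Bool} (h : true ∈ r) :
    ∃ r₀, r = r₀ ++ true :: List.replicate (finalDescent r) false := by
  have hsplit : r.reverse = r.reverse.takeWhile (fun b => !b) ++ r.reverse.dropWhile (fun b => !b) :=
    List.takeWhile_append_dropWhile.symm
  have htw : r.reverse.takeWhile (fun b => !b) = List.replicate (finalDescent r) false := by
    apply List.eq_replicate_length.2
    intro b hb
    have := List.mem_takeWhile_imp hb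
    simpa using this
  have hdw : ∃ z, r.reverse.dropWhile (fun b => !b) = true :: z := by
    cases hcase : r.reverse.dropWhile (fun b => !b) with
    | nil =>
      exfalso
      have : true ∈ r.reverse := by simpa using h
      rw [hsplit, hcase, List.append_nil, htw] at this
      simpa using List.eq_of_mem_replicate this
    | cons b z =>
      have hne : r.reverse.dropWhile (fun b => !b) ≠ [] := by rw [hcase]; simp
      have h1 := List.head_dropWhile_not (fun b => !b) hne
      have h2 : (r.reverse.dropWhile (fun b => !b)).head? = some b := by rw [hcase]; rfl
      have h3 := List.head?_eq_head (l := r.reverse.dropWhile (fun b => !b)) hne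
      rw [h2] at h3
      have hb : b = true := by
        have := h3.symm
        injection this with h4
        rw [h4] at h1
        simpa using h1
      exact ⟨z, by rw [hb]⟩
  obtain ⟨z, hz⟩ := hdw
  refine ⟨z.reverse, ?_⟩
  have : r.reverse = List.replicate (finalDescent r) false ++ true :: z := by
    rw [hsplit, htw, hz]
  calc r = r.reverse.reverse := (List.reverse_reverse r).symm
    _ = _ := by rw [this]; simp [List.reverse_replicate]

lemma dyck_build {m : ℕ} (a : List Bool) (k : ℕ)
    (hpre : ∀ p, p <+: a → p.count false ≤ m * p.count true)
    (hcnt : a.count false + k = m * a.count true) :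
    IsDyck m (a ++ List.replicate k false) := by
  constructor
  · simp [List.count_append, List.count_replicate]
    omega
  · intro p hp
    rcases prefix_split hp with h1 | ⟨q, hq, rfl⟩
    · exact hpre p h1
    · obtain ⟨hq1, hq2⟩ := prefix_replicate hq
      have := hpre a (List.prefix_refl a)
      rw [hq1]
      simp [List.count_append, List.count_replicate]
      omega

lemma key (m : ℕ) (hm : 1 ≤ m) (u d r : List Bool) (hd : d ≠ []) (hdy : IsDyck m d)
    (hv : IsDyck m (u ++ false :: (d ++ r)))
    (hmax : ∀ d' : List Bool, d' <+: d ++ r → IsDyck m d' → d'.length ≤ d.length) :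
    ((delPeak m (u ++ false :: (d ++ r)) = delPeak m (u ++ d ++ false :: r) ∨
        GreedyCover m (delPeak m (u ++ false :: (d ++ r)))
          (delPeak m (u ++ d ++ false :: r))) ∧
      (delPeak m (u ++ false :: (d ++ r)) = delPeak m (u ++ d ++ false :: r) ↔
        ∃ s : ℕ, d ++ r = true :: List.replicate s false)) := by
  by_cases hex : ∃ s : ℕ, d ++ r = true :: List.replicate s false
  · -- Case A: last valley
    obtain ⟨s, hs⟩ := hex
    obtain ⟨t, ht⟩ := dyck_head hdy hd
    subst ht
    have htreq : t ++ r = List.replicate s false := by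
      have h' : true :: (t ++ r) = true :: List.replicate s false := by simpa using hs
      injection h'
    have hpt : t ++ r <+: List.replicate s false := htreq ▸ List.prefix_refl _
    have hptt : t <+: List.replicate s false := (List.prefix_append t r).trans hpt
    obtain ⟨ht1, ht2⟩ := prefix_replicate hptt
    have htm : t.length = m := by
      have := hdy.1
      rw [ht1] at this
      simpa [List.count_replicate] using this
    have hsm : m ≤ s := htm ▸ ht2
    have hreq : r = List.replicate (s - m) false := by
      have h1 : t ++ r = List.replicate s false := htreq
      have h2 : List.replicate s false
          = List.replicate m false ++ List.replicate (s - m) false := by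
        rw [← List.replicate_add]; congr 1; omega
      rw [ht1, htm, h2] at h1
      exact List.append_cancel_left h1
    have hveq : u ++ false :: ((true :: t) ++ r)
        = (u ++ [false]) ++ true :: List.replicate s false := by
      have : (true :: t) ++ r = true :: List.replicate s false := hs
      rw [this]; simp
    have hweq : u ++ (true :: t) ++ false :: r = u ++ true :: List.replicate (s + 1) false := by
      rw [ht1, htm, hreq]
      have h3 : s + 1 = m + ((s - m) + 1) := by omega
      rw [h3, List.replicate_add, List.replicate_succ]
      simp
    have heq : delPeak m (u ++ false :: ((true :: t) ++ r))
        = delPeak m (u ++ (true :: t) ++ false :: r) := by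
      rw [hveq, hweq, delPeak_eq, delPeak_eq]
      have h4 : s + 1 - m = (s - m) + 1 := by omega
      rw [h4, List.replicate_succ]
      simp
    exact ⟨Or.inl heq, ⟨fun _ => ⟨s, hs⟩, fun _ => heq⟩⟩
  · by_cases htr : true ∈ r
    · -- Case B1: last peak inside r
      obtain ⟨r₀, hr⟩ := decomp_true htr
      set f := finalDescent r with hf
      set r' := r₀ ++ List.replicate (f - m) false with hr'
      have hveq : u ++ false :: (d ++ r)
          = (u ++ false :: (d ++ r₀)) ++ true :: List.replicate f false := by
        rw [hr]; simp
      have hweq : u ++ d ++ false :: r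
          = (u ++ d ++ false :: r₀) ++ true :: List.replicate f false := by
        rw [hr]; simp
      have hv' : delPeak m (u ++ false :: (d ++ r)) = u ++ false :: (d ++ r') := by
        rw [hveq, delPeak_eq, hr']; simp
      have hw' : delPeak m (u ++ d ++ false :: r) = u ++ d ++ false :: r' := by
        rw [hweq, delPeak_eq, hr']; simp
      have hgr : ∀ d' : List Bool, d' <+: d ++ r' → IsDyck m d' → d'.length ≤ d.length := by
        intro d' hp hdy'
        have hp2 : d' <+: (d ++ r₀) ++ List.replicate (f - m) false := by
          rw [hr'] at hp; rwa [List.append_assoc]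
        have hdr0 : d ++ r₀ <+: d ++ r := by
          rw [hr]; exact ⟨true :: List.replicate f false, by simp⟩
        rcases prefix_split hp2 with h1 | ⟨q, hq, rfl⟩
        · exact hmax d' (h1.trans hdr0) hdy'
        · obtain ⟨hq1, hq2⟩ := prefix_replicate hq
          rcases Nat.eq_zero_or_pos q.length with h0 | h0
          · have hq0 : q = [] := List.length_eq_zero_iff.mp h0
            subst hq0
            simp only [List.append_nil] at hdy' ⊢
            exact hmax _ hdr0 hdy'
          · exfalso
            set j := q.length with hj
            have hjf : j + m ≤ f := by omega
            set d'' := ((d ++ r₀) ++ [true]) ++ List.replicate (j + m) false with hd''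
            have hbase : (d ++ r₀).count false ≤ m * (d ++ r₀).count true :=
              hdy'.2 (d ++ r₀) ⟨q, rfl⟩
            have hdcnt := hdy'.1
            rw [hq1] at hdcnt
            simp [List.count_append, List.count_replicate, Nat.mul_add] at hdcnt
            -- hdcnt : (d++r₀).count false + j = m * (d++r₀).count true
            have hd''dyck : IsDyck m d'' := by
              apply dyck_build
              · intro p hp3
                rcases prefix_split hp3 with h2 | ⟨q', hq', rfl⟩
                · exact hdy'.2 p (h2.trans ⟨q, rfl⟩)
                · have hq'0 : q'.count false = 0 := by
                    rw [List.count_eq_zero]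
                    intro hmem
                    have := hq'.sublist.subset hmem
                    simp at this
                  simp [List.count_append, Nat.mul_add, hq'0] at hbase ⊢
                  omega
              · simp [List.count_append, Nat.mul_add] at hdcnt hbase ⊢
                omega
            have hd''p : d'' <+: d ++ r := by
              rw [hr]
              refine ⟨List.replicate (f - (j + m)) false, ?_⟩
              have hsplitf : List.replicate f false
                  = List.replicate (j + m) false ++ List.replicate (f - (j + m)) false := by
                rw [← List.replicate_add]; congr 1; omega
              rw [hd'', hsplitf]; simp
            have hle := hmax d'' hd''p hd''dyck
            rw [hd''] at hle
            simp only [List.length_append, List.length_replicate, List.length_cons,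
              List.length_nil] at hle
            omega
      have hcov : GreedyCover m (u ++ false :: (d ++ r')) (u ++ d ++ false :: r') :=
        ⟨u, d, r', hd, hdy, rfl, rfl, hgr⟩
      rw [hv', hw']
      exact ⟨Or.inr hcov, ⟨fun heq => absurd heq (cover_ne hcov), fun hx => absurd hx hex⟩⟩
    · -- Case B2: last peak inside d
      have hrrep : r = List.replicate r.length false := by
        apply List.eq_replicate_length.2
        intro b hb
        cases b
        · rfl
        · exact absurd hb htr
      set t := r.length with htt
      have htd : true ∈ d := by
        obtain ⟨t', ht'⟩ := dyck_head hdy hd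
        rw [ht']; exact List.mem_cons_self
      obtain ⟨d₀, hd0⟩ := decomp_true htd
      set g := finalDescent d with hg
      have hd0p : d₀ <+: d := ⟨true :: List.replicate g false, hd0.symm⟩
      have hpre0 : d₀.count false ≤ m * d₀.count true := hdy.2 d₀ hd0p
      have hcnt : d₀.count false + g = m * d₀.count true + m := by
        have h1 := hdy.1
        rw [hd0] at h1
        simp [List.count_append, List.count_replicate, Nat.mul_add] at h1
        omega
      have hgm : m ≤ g := by omega
      have hd0ne : d₀ ≠ [] := by
        intro h0
        apply hex
        refine ⟨m + t, ?_⟩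
        have hgmeq : g = m := by
          rw [h0] at hcnt
          simp at hcnt
          omega
        rw [hd0, h0, hrrep, hgmeq, List.replicate_add]
        simp
      set e := d₀ ++ List.replicate (g - m) false with he
      have hedyck : IsDyck m e := by
        apply dyck_build
        · intro p hp
          exact hdy.2 p (hp.trans hd0p)
        · omega
      have hene : e ≠ [] := by
        rw [he]
        simp [hd0ne]
      have hveq : u ++ false :: (d ++ r)
          = (u ++ false :: d₀) ++ true :: List.replicate (g + t) false := by
        rw [hd0, hrrep, List.replicate_add]; simp
      have hweq : u ++ d ++ false :: r
          = (u ++ d₀) ++ true :: List.replicate (g + t + 1) false := by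
        rw [hd0, hrrep]
        have h3 : g + t + 1 = g + (t + 1) := by omega
        rw [h3, List.replicate_add, List.replicate_succ]
        simp
      have hv' : delPeak m (u ++ false :: (d ++ r))
          = u ++ false :: (e ++ List.replicate t false) := by
        rw [hveq, delPeak_eq, he]
        have h4 : g + t - m = (g - m) + t := by omega
        rw [h4, List.replicate_add]
        simp
      have hw' : delPeak m (u ++ d ++ false :: r)
          = u ++ e ++ false :: List.replicate t false := by
        rw [hweq, delPeak_eq, he]
        have h5 : g + t + 1 - m = (g - m) + (1 + t) := by omega
        rw [h5, List.replicate_add, List.replicate_add]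
        simp [List.replicate_one]
      have hgr : ∀ d' : List Bool, d' <+: e ++ List.replicate t false → IsDyck m d' →
          d'.length ≤ e.length := by
        intro d' hp hdy'
        rcases prefix_split hp with h1 | ⟨q, hq, rfl⟩
        · exact h1.length_le
        · obtain ⟨hq1, hq2⟩ := prefix_replicate hq
          have hcnt' := hdy'.1
          rw [hq1] at hcnt'
          simp [he, List.count_append, List.count_replicate, Nat.mul_add] at hcnt'
          have hq0 : q.length = 0 := by omega
          simp [List.length_append, hq0]
      have hcov : GreedyCover m (u ++ false :: (e ++ List.replicate t false))
          (u ++ e ++ false :: List.replicate t false) :=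
        ⟨u, e, List.replicate t false, hene, hedyck, rfl, rfl, hgr⟩
      rw [hv', hw']
      exact ⟨Or.inr hcov, ⟨fun heq => absurd heq (cover_ne hcov), fun hx => absurd hx hex⟩⟩

lemma dyck_of_cover {m : ℕ} {a b : List Bool} (h : GreedyCover m a b) (ha : IsDyck m a) :
    IsDyck m b := by
  obtain ⟨u, d, v, hd, hdy, rfl, rfl, -⟩ := h
  have hu : u.count false ≤ m * u.count true := ha.2 u ⟨false :: (d ++ v), rfl⟩
  constructor
  · have h1 := ha.1
    simp [List.count_append, Nat.mul_add] at h1 ⊢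
    omega
  · intro p hp
    have hp' : p <+: u ++ (d ++ false :: v) := by rwa [List.append_assoc] at hp
    rcases prefix_split hp' with h1 | ⟨q, hq, rfl⟩
    · exact ha.2 p (h1.trans ⟨false :: (d ++ v), rfl⟩)
    · rcases prefix_split hq with h2 | ⟨q', hq', rfl⟩
      · have h3 := hdy.2 q h2
        simp [List.count_append, Nat.mul_add]
        omega
      · cases q' with
        | nil =>
          have h3 := hdy.1
          simp [List.count_append, Nat.mul_add]
          omega
        | cons b t =>
          rw [List.cons_prefix_cons] at hq'
          obtain ⟨rfl, htv⟩ := hq'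
          obtain ⟨z, rfl⟩ := htv
          have hpa : u ++ false :: (d ++ t) <+: u ++ false :: (d ++ (t ++ z)) :=
            ⟨z, by simp⟩
          have h3 := ha.2 _ hpa
          simp [List.count_append, Nat.mul_add] at h3 ⊢
          omega

lemma dyck_of_le {m : ℕ} {a b : List Bool} (h : GreedyLe m a b) (ha : IsDyck m a) :
    IsDyck m b := by
  induction h with
  | refl => exact ha
  | tail _ hbc ih => exact dyck_of_cover hbc ih

/-- Deleting the last peak is compatible with the greedy order:
if `v ⋖ w` (with witnessing decomposition `v = u·0·d·r`, `w = u·d·0·r`), then either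
`v' = w'` or `v' ⋖ w'`, and `v' = w'` happens exactly when the cover relation takes
place in the last valley of `v` (i.e. the factor following the valley's down step is
the last peak, followed only by down steps:`d ++ r = 1·0^s`).  Consequently `v ≤ w`
implies `v' ≤ w'`. -/
theorem delPeak_greedy (m : ℕ) (hm : 1 ≤ m) :
    (∀ u d r : List Bool, d ≠ [] → IsDyck m d →
      IsDyck m (u ++ false :: (d ++ r)) →
      (∀ d' : List Bool, d' <+: d ++ r → IsDyck m d' → d'.length ≤ d.length) →
      ((delPeak m (u ++ false :: (d ++ r)) = delPeak m (u ++ d ++ false :: r) ∨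
          GreedyCover m (delPeak m (u ++ false :: (d ++ r)))
            (delPeak m (u ++ d ++ false :: r))) ∧
        (delPeak m (u ++ false :: (d ++ r)) = delPeak m (u ++ d ++ false :: r) ↔
          ∃ s : ℕ, d ++ r = true :: List.replicate s false))) ∧
    (∀ v w : List Bool, IsDyck m v → v ≠ [] → GreedyLe m v w →
        GreedyLe m (delPeak m v) (delPeak m w)) := by
  constructor
  · intro u d r h1 h2 h3 h4
    exact key m hm u d r h1 h2 h3 h4
  · intro v w hv hne hle
    induction hle with
    | refl => exact Relation.ReflTransGen.refl
    | @tail b c hab hbc ih =>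
      have hb : IsDyck m b := dyck_of_le hab hv
      obtain ⟨u, d, r, hd, hdy, hbe, hce, hmx⟩ := hbc
      subst hbe
      subst hce
      have hk := key m hm u d r hd hdy hb hmx
      rcases hk.1 with heq | hcov
      · rw [← heq]; exact ih
      · exact ih.tail hcov
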